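/- Let Θ be an MLL proof net and A, B formula occurrences with B ∉ e_Θ(A) and A ∉ e_Θ(B). Then e_Θ(A) ∩ e_Θ(B) = ∅. -/

import Mathlib

/-- An MLL link: an ID-link (axiom link) with two conclusions,
a tensor link or a par link with two premises and one conclusion. -/
inductive MLLLink (V : Type) where
  | idl (c₁ c₂ : V)
  | tensor (a b c : V)
  | par (a b c : V)
deriving DecidableEq

namespace MLLLink
variable {V V' : Type}

def prems : MLLLink V → List V
  | idl _ _ => []
  | tensor a b _ => [a, b]
  | par a b _ => [a, b]

def concls : MLLLink V → List V
  | idl c₁ c₂ => [c₁, c₂]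
  | tensor _ _ c => [c]
  | par _ _ c => [c]

def isId : MLLLink V → Bool
  | idl _ _ => true
  | _ => false

def isTensor : MLLLink V → Bool
  | tensor _ _ _ => true
  | _ => false

def isPar : MLLLink V → Bool
  | par _ _ _ => true
  | _ => false

/-- Relabel the vertices of a link along a map. -/
def map (f : V → V') : MLLLink V → MLLLink V'
  | idl c₁ c₂ => idl (f c₁) (f c₂)
  | tensor a b c => tensor (f a) (f b) (f c)
  | par a b c => par (f a) (f b) (f c)

/-- Forget whether a multiplicative link is ⊗ or ⅋ (normalizing ⅋ to ⊗). -/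
def forget : MLLLink V → MLLLink V
  | par a b c => tensor a b c
  | L => L

end MLLLink

/-- An MLL proof structure on the set `V` of formula occurrences:
every occurrence is the conclusion of exactly one link and the premise of
at most one link, and the occurrences appearing in a link are distinct. -/
structure MLLProofStructure (V : Type) [DecidableEq V] where
  links : Finset (MLLLink V)
  concl_exists : ∀ v : V, ∃ L ∈ links, v ∈ L.concls
  concl_unique : ∀ v : V, ∀ L ∈ links, ∀ L' ∈ links,
      v ∈ L.concls → v ∈ L'.concls → L = L'
  prem_unique : ∀ v : V, ∀ L ∈ links, ∀ L' ∈ links,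
      v ∈ L.prems → v ∈ L'.prems → L = L'
  nodup : ∀ L ∈ links, (L.prems ++ L.concls).Nodup

variable {V : Type} [DecidableEq V]

/-- The edge generated by a link under a DR-switching `S`
(`S L = true` selects the left premise of a ⅋-link). -/
def switchEdge (S : MLLLink V → Bool) (L : MLLLink V) (v w : V) : Prop :=
  match L with
  | .idl c₁ c₂ => v = c₁ ∧ w = c₂
  | .tensor a b c => (v = a ∧ w = c) ∨ (v = b ∧ w = c)
  | .par a b c =>
      (S (.par a b c) = true ∧ v = a ∧ w = c) ∨
      (S (.par a b c) = false ∧ v = b ∧ w = c)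

def drRel (Θ : MLLProofStructure V) (S : MLLLink V → Bool) (v w : V) : Prop :=
  ∃ L ∈ Θ.links, switchEdge S L v w

/-- The Danos–Regnier graph of a proof structure under a switching. -/
def drGraph (Θ : MLLProofStructure V) (S : MLLLink V → Bool) : SimpleGraph V :=
  SimpleGraph.fromRel (drRel Θ S)

/-- Danos–Regnier criterion: a proof net is a proof structure all of whose
DR-graphs are acyclic and connected. -/
def IsProofNet (Θ : MLLProofStructure V) : Prop :=
  ∀ S : MLLLink V → Bool, (drGraph Θ S).IsAcyclic ∧ (drGraph Θ S).Connected

/-- The edges from `A` down to the conclusion of the link of which `A` is a premise. -/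
def belowEdges (Θ : MLLProofStructure V) (A : V) : Set (Sym2 V) :=
  {e | ∃ L ∈ Θ.links, A ∈ L.prems ∧ ∃ c ∈ L.concls, e = s(A, c)}

/-- The DR-graph with the edge below `A` deleted. -/
def empGraph (Θ : MLLProofStructure V) (S : MLLLink V → Bool) (A : V) : SimpleGraph V :=
  (drGraph Θ S).deleteEdges (belowEdges Θ A)

/-- The vertex set of `Θ_S^A`: the connected component of `A` in the DR-graph
after deleting the edge below `A`. -/
def empComp (Θ : MLLProofStructure V) (S : MLLLink V → Bool) (A : V) : Set V :=
  {v | (empGraph Θ S A).Reachable A v}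

/-- The empire of `A` in `Θ`. -/
def empire (Θ : MLLProofStructure V) (A : V) : Set V :=
  ⋂ S : MLLLink V → Bool, empComp Θ S A

/-- A conclusion of `Θ` is a formula occurrence which is a premise of no link. -/
def IsConclusion (Θ : MLLProofStructure V) (v : V) : Prop :=
  ∀ L ∈ Θ.links, v ∉ L.prems

/-- All premises and conclusions of a link lie in `X`. -/
def allIn (X : Set V) (L : MLLLink V) : Prop :=
  (∀ w ∈ L.prems, w ∈ X) ∧ (∀ w ∈ L.concls, w ∈ X)

/-- `X` together with the links of `Θ` contained in `X` forms a proof structure. -/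
def IsSubProofStructure (Θ : MLLProofStructure V) (X : Set V) : Prop :=
  ∀ v ∈ X, ∃ L ∈ Θ.links, v ∈ L.concls ∧ allIn X L

def subDrRel (Θ : MLLProofStructure V) (X : Set V) (S : MLLLink V → Bool)
    (v w : V) : Prop :=
  ∃ L ∈ Θ.links, allIn X L ∧ switchEdge S L v w

/-- The DR-graph of the substructure of `Θ` induced on `X`. -/
def subDrGraph (Θ : MLLProofStructure V) (X : Set V) (S : MLLLink V → Bool) :
    SimpleGraph V :=
  SimpleGraph.fromRel (subDrRel Θ X S)

/-- `X` is a sub-proof net of `Θ`: it induces a proof structure whose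
DR-graphs are all acyclic and connected (on `X`). -/
def IsSubProofNet (Θ : MLLProofStructure V) (X : Set V) : Prop :=
  IsSubProofStructure Θ X ∧
    ∀ S : MLLLink V → Bool, (subDrGraph Θ X S).IsAcyclic ∧
      ∀ v ∈ X, ∀ w ∈ X, (subDrGraph Θ X S).Reachable v w

/-- `A` is a conclusion of the substructure induced on `X`. -/
def IsConclusionOfSub (Θ : MLLProofStructure V) (X : Set V) (A : V) : Prop :=
  A ∈ X ∧ ∀ L ∈ Θ.links, allIn X L → A ∉ L.prems

/-- `e` is an isomorphism of the underlying link graphs of `Θ₁` and `Θ₂`,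
forgetting the ⊗/⅋ labels: they witness that `Θ₁` and `Θ₂` are in the same PS-family. -/
def FamilyIso {V₁ V₂ : Type} [DecidableEq V₁] [DecidableEq V₂]
    (Θ₁ : MLLProofStructure V₁) (Θ₂ : MLLProofStructure V₂) (e : V₁ ≃ V₂) : Prop :=
  Θ₁.links.image (fun L => (L.map e).forget) = Θ₂.links.image MLLLink.forget

/-- The number of (multiplicative) links at which the ⊗/⅋-labellings of
`Θ₁` and `Θ₂` differ along `e`. -/
def diffCount {V₁ V₂ : Type} [DecidableEq V₁] [DecidableEq V₂]
    (Θ₁ : MLLProofStructure V₁) (Θ₂ : MLLProofStructure V₂) (e : V₁ ≃ V₂) : ℕ :=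
  (Θ₁.links.filter (fun L => L.map e ∉ Θ₂.links)).card

set_option linter.unusedSectionVars false

-- ============ auxiliary development ============
namespace EmpAux

open SimpleGraph

lemma finiteV (Θ : MLLProofStructure V) : Finite V := by
  rw [← Set.finite_univ_iff]
  refine Set.Finite.subset
    (Set.Finite.biUnion Θ.links.finite_toSet fun L _ => L.concls.finite_toSet) ?_
  intro v _
  obtain ⟨L, hL, hv⟩ := Θ.concl_exists v
  exact Set.mem_biUnion hL hv

lemma nodup_par {Θ : MLLProofStructure V} {a b c : V} (h : MLLLink.par a b c ∈ Θ.links) :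
    a ≠ b ∧ a ≠ c ∧ b ≠ c := by
  have := Θ.nodup _ h
  simp [MLLLink.prems, MLLLink.concls] at this
  tauto

lemma nodup_tensor {Θ : MLLProofStructure V} {a b c : V} (h : MLLLink.tensor a b c ∈ Θ.links) :
    a ≠ b ∧ a ≠ c ∧ b ≠ c := by
  have := Θ.nodup _ h
  simp [MLLLink.prems, MLLLink.concls] at this
  tauto

lemma nodup_idl {Θ : MLLProofStructure V} {c₁ c₂ : V} (h : MLLLink.idl c₁ c₂ ∈ Θ.links) :
    c₁ ≠ c₂ := by
  have := Θ.nodup _ h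
  simp [MLLLink.prems, MLLLink.concls] at this
  exact this

lemma drGraph_adj {Θ : MLLProofStructure V} {S : MLLLink V → Bool} {v w : V} :
    (drGraph Θ S).Adj v w ↔ v ≠ w ∧ (drRel Θ S v w ∨ drRel Θ S w v) :=
  SimpleGraph.fromRel_adj _ v w

lemma adj_of_link {Θ : MLLProofStructure V} {S : MLLLink V → Bool} {L : MLLLink V}
    (hL : L ∈ Θ.links) {v w : V} (h : switchEdge S L v w) (hvw : v ≠ w) :
    (drGraph Θ S).Adj v w :=
  drGraph_adj.mpr ⟨hvw, Or.inl ⟨L, hL, h⟩⟩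

lemma switchEdge_congr {S S' : MLLLink V → Bool} {L : MLLLink V} (h : S' L = S L) {v w : V} :
    switchEdge S' L v w ↔ switchEdge S L v w := by
  cases L with
  | idl c₁ c₂ => rfl
  | tensor a b c => rfl
  | par a b c => simp only [switchEdge]; rw [h]

lemma adj_cases {Θ : MLLProofStructure V} {S : MLLLink V → Bool} {v w : V}
    (h : (drGraph Θ S).Adj v w) :
    ∃ L ∈ Θ.links,
      (∃ c₁ c₂, L = MLLLink.idl c₁ c₂ ∧ s(v, w) = s(c₁, c₂)) ∨
      (∃ a b c, L = MLLLink.tensor a b c ∧ (s(v, w) = s(a, c) ∨ s(v, w) = s(b, c))) ∨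
      (∃ a b c, L = MLLLink.par a b c ∧
        ((S L = true ∧ s(v, w) = s(a, c)) ∨ (S L = false ∧ s(v, w) = s(b, c)))) := by
  rcases drGraph_adj.mp h with ⟨hne, hrel | hrel⟩ <;>
  · obtain ⟨L, hL, hsw⟩ := hrel
    refine ⟨L, hL, ?_⟩
    cases L with
    | idl c₁ c₂ =>
        obtain ⟨rfl, rfl⟩ := hsw
        exact Or.inl ⟨_, _, rfl, by first | rfl | exact Sym2.eq_swap⟩
    | tensor a b c =>
        refine Or.inr (Or.inl ⟨a, b, c, rfl, ?_⟩)
        rcases hsw with ⟨rfl, rfl⟩ | ⟨rfl, rfl⟩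
        · exact Or.inl (by first | rfl | exact Sym2.eq_swap)
        · exact Or.inr (by first | rfl | exact Sym2.eq_swap)
    | par a b c =>
        refine Or.inr (Or.inr ⟨a, b, c, rfl, ?_⟩)
        rcases hsw with ⟨hS, rfl, rfl⟩ | ⟨hS, rfl, rfl⟩
        · exact Or.inl ⟨hS, by first | rfl | exact Sym2.eq_swap⟩
        · exact Or.inr ⟨hS, by first | rfl | exact Sym2.eq_swap⟩

end EmpAux

set_option linter.unusedSectionVars false
namespace EmpAux2
open SimpleGraph EmpAux
variable {V : Type} [DecidableEq V]

lemma adj_of_link' {Θ : MLLProofStructure V} {S : MLLLink V → Bool} {L : MLLLink V}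
    (hL : L ∈ Θ.links) {p z v w : V} (h : switchEdge S L p z) (hne : v ≠ w)
    (he : s(v, w) = s(p, z)) : (drGraph Θ S).Adj v w := by
  rw [Sym2.eq_iff] at he
  rcases he with ⟨rfl, rfl⟩ | ⟨rfl, rfl⟩
  · exact adj_of_link hL h hne
  · exact (adj_of_link hL h hne.symm).symm

/-- One-par-flip edge analysis. -/
lemma edge_update {Θ : MLLProofStructure V} {r₁ r₂ z₀ : V}
    {S S' : MLLLink V → Bool}
    (hother : ∀ L, L ≠ MLLLink.par r₁ r₂ z₀ → S' L = S L)
    {x : V} (hx : switchEdge S' (MLLLink.par r₁ r₂ z₀) x z₀)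
    {v w : V} (h : (drGraph Θ S').Adj v w) :
    (drGraph Θ S).Adj v w ∨ s(v, w) = s(x, z₀) := by
  obtain ⟨L, hL, hc⟩ := adj_cases h
  have hne : v ≠ w := h.ne
  rcases hc with ⟨c₁, c₂, rfl, he⟩ | ⟨a, b, c, rfl, he⟩ | ⟨a, b, c, rfl, hcc⟩
  · exact Or.inl (adj_of_link' hL (by exact ⟨rfl, rfl⟩) hne he)
  · rcases he with he | he
    · exact Or.inl (adj_of_link' hL (Or.inl ⟨rfl, rfl⟩) hne he)
    · exact Or.inl (adj_of_link' hL (Or.inr ⟨rfl, rfl⟩) hne he)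
  · by_cases hLl : MLLLink.par a b c = MLLLink.par r₁ r₂ z₀
    · injection hLl with h1 h2 h3
      subst h1; subst h2; subst h3
      right
      rcases hcc with ⟨hS, he⟩ | ⟨hS, he⟩ <;>
        rcases hx with ⟨hS', rfl, -⟩ | ⟨hS', rfl, -⟩ <;>
        first
          | exact he
          | (rw [hS] at hS'; exact absurd hS' (by simp))
    · have hSS : S' (MLLLink.par a b c) = S (MLLLink.par a b c) := hother _ hLl
      left
      rcases hcc with ⟨hS, he⟩ | ⟨hS, he⟩
      · exact adj_of_link' hL (Or.inl ⟨hSS ▸ hS, rfl, rfl⟩) hne he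
      · exact adj_of_link' hL (Or.inr ⟨hSS ▸ hS, rfl, rfl⟩) hne he

lemma empComp_adj {Θ : MLLProofStructure V} {S : MLLLink V → Bool} {A x y : V}
    (hx : x ∈ empComp Θ S A) (hadj : (drGraph Θ S).Adj x y)
    (hb : s(x, y) ∉ belowEdges Θ A) : y ∈ empComp Θ S A :=
  Reachable.trans hx (Adj.reachable (by rw [empGraph, deleteEdges_adj]; exact ⟨hadj, hb⟩))

lemma reach_subst {G H : SimpleGraph V}
    (h : ∀ u v, G.Adj u v → H.Reachable u v) {x y : V} (hr : G.Reachable x y) :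
    H.Reachable x y := by
  obtain ⟨w⟩ := hr
  induction w with
  | nil => exact Reachable.refl _
  | cons hadj w' ih => exact (h _ _ hadj).trans ih

lemma reach_or {G H : SimpleGraph V} {a b : V}
    (h : ∀ u v, G.Adj u v → H.Adj u v ∨ s(u, v) = s(a, b)) {x y : V} (w : G.Walk x y) :
    H.Reachable x y ∨ H.Reachable x a ∨ H.Reachable x b := by
  induction w with
  | nil => exact Or.inl (Reachable.refl _)
  | @cons u m y hadj w' ih =>
      rcases h _ _ hadj with hH | he
      · rcases ih with h1 | h1 | h1
        · exact Or.inl (hH.reachable.trans h1)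
        · exact Or.inr (Or.inl (hH.reachable.trans h1))
        · exact Or.inr (Or.inr (hH.reachable.trans h1))
      · rw [Sym2.eq_iff] at he
        rcases he with ⟨rfl, rfl⟩ | ⟨rfl, rfl⟩
        · exact Or.inr (Or.inl (Reachable.refl _))
        · exact Or.inr (Or.inr (Reachable.refl _))

/-- In a path, any two edges containing the initial vertex are equal. -/
lemma edges_start_unique {G : SimpleGraph V} {u v : V} {w : G.Walk u v} (hw : w.IsPath)
    {e e' : Sym2 V} (he : e ∈ w.edges) (he' : e' ∈ w.edges) (hu : u ∈ e) (hu' : u ∈ e') :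
    e = e' := by
  have key : ∀ f ∈ w.edges, u ∈ f → ∀ g ∈ w.edges, u ∈ g → f = g := by
    cases w with
    | nil => intro f hf; simp at hf
    | @cons _ m _ hadj w' =>
        have hu' : u ∉ w'.support := ((Walk.cons_isPath_iff _ _).mp hw).2
        intro f hf huf g hg hug
        rw [Walk.edges_cons] at hf hg
        have hf' : f = s(u, m) := by
          rcases List.mem_cons.mp hf with h | h
          · exact h
          · exfalso
            obtain ⟨y, rfl⟩ := Sym2.mem_iff_exists.mp huf
            exact hu' (Walk.fst_mem_support_of_mem_edges w' h)
        have hg' : g = s(u, m) := by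
          rcases List.mem_cons.mp hg with h | h
          · exact h
          · exfalso
            obtain ⟨y, rfl⟩ := Sym2.mem_iff_exists.mp hug
            exact hu' (Walk.fst_mem_support_of_mem_edges w' h)
        rw [hf', hg']
  exact key e he hu e' he' hu'

/-- If a path starts at `u` and `e` is an edge of it containing `u`, the path
decomposes as `cons` along `e`. -/
lemma exists_cons_of_start_mem_edge {G : SimpleGraph V} {u v : V} {w : G.Walk u v}
    (hw : w.IsPath) {x : V} (he : s(u, x) ∈ w.edges) (hux : u ≠ x) :
    ∃ (hadj : G.Adj u x) (w' : G.Walk x v), w = Walk.cons hadj w' := by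
  cases w with
  | nil => simp at he
  | @cons _ m _ hadj w' =>
      have hu' : u ∉ w'.support := ((Walk.cons_isPath_iff _ _).mp hw).2
      rw [Walk.edges_cons] at he
      have hxm : x = m := by
        rcases List.mem_cons.mp he with h | h
        · rcases Sym2.eq_iff.mp h with ⟨_, h2⟩ | ⟨h1, h2⟩
          · exact h2
          · exact absurd h2.symm hux
        · exact absurd (Walk.fst_mem_support_of_mem_edges w' h) hu'
      subst hxm
      exact ⟨hadj, w', rfl⟩

end EmpAux2

namespace EmpAux3
open SimpleGraph EmpAux EmpAux2
variable {V : Type} [DecidableEq V]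

lemma edgeSet_update {Θ : MLLProofStructure V} {r₁ r₂ z₀ : V}
    {S S' : MLLLink V → Bool}
    (hother : ∀ L, L ≠ MLLLink.par r₁ r₂ z₀ → S' L = S L)
    {x : V} (hx : switchEdge S' (MLLLink.par r₁ r₂ z₀) x z₀)
    {e : Sym2 V} (he : e ∈ (drGraph Θ S').edgeSet) :
    e ∈ (drGraph Θ S).edgeSet ∨ e = s(x, z₀) := by
  induction e using Sym2.ind with
  | _ v w =>
    rw [SimpleGraph.mem_edgeSet] at he
    exact (edge_update hother hx he).imp (fun h => (SimpleGraph.mem_edgeSet _).mpr h) id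

/-- Core of the upward-closure lemma, for a ⅋-link whose switch does not
select the premise `p`. -/
lemma upward_core {Θ : MLLProofStructure V} (hΘ : IsProofNet Θ) {A c : V}
    (hbA : belowEdges Θ A = {s(A, c)}) (hac : A ≠ c)
    (hNP : ∀ x y : V, MLLLink.par x y A ∈ Θ.links → x ≠ c ∧ y ≠ c)
    {r₁ r₂ z₀ : V} (hℓ : MLLLink.par r₁ r₂ z₀ ∈ Θ.links)
    {p q : V} {S S' : MLLLink V → Bool}
    (hother : ∀ L, L ≠ MLLLink.par r₁ r₂ z₀ → S' L = S L)
    (hq : switchEdge S (MLLLink.par r₁ r₂ z₀) q z₀)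
    (hp' : switchEdge S' (MLLLink.par r₁ r₂ z₀) p z₀)
    (hedge : s(p, z₀) ∉ belowEdges Θ A) (hzE : z₀ ∈ empire Θ A)
    (hpz : p ≠ z₀) (hpq : p ∈ ({r₁, r₂} : Set V))
    (hpc : ¬ (empGraph Θ S A).Reachable A p) : False := by
  have hz' : (empGraph Θ S' A).Reachable A z₀ := Set.mem_iInter.mp hzE S'
  have hsub : (empGraph Θ S' A).edgeSet ⊆ (drGraph Θ S').edgeSet := by
    rw [empGraph, edgeSet_deleteEdges]; exact Set.diff_subset
  have hnb : ∀ e ∈ (empGraph Θ S' A).edgeSet, e ∉ belowEdges Θ A := by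
    rw [empGraph, edgeSet_deleteEdges]; exact fun e he => he.2
  obtain ⟨w₀⟩ := hz'
  let w₁ : (drGraph Θ S').Walk A z₀ :=
    w₀.transfer (drGraph Θ S') (fun e he => hsub (w₀.edges_subset_edgeSet he))
  let τ := w₁.bypass
  have hτp : τ.IsPath := w₁.bypass_isPath
  have hτe : ∀ e ∈ τ.edges, e ∈ (empGraph Θ S' A).edgeSet := by
    intro e he
    have h2 := w₁.edges_bypass_subset he
    rw [Walk.edges_transfer] at h2
    exact w₀.edges_subset_edgeSet h2
  have hτnb : ∀ e ∈ τ.edges, e ∉ belowEdges Θ A := fun e he => hnb _ (hτe e he)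
  have hτG' : ∀ e ∈ τ.edges, e ∈ (drGraph Θ S').edgeSet := fun e he => hsub (hτe e he)
  by_cases hpzτ : s(p, z₀) ∈ τ.edges
  · -- the path to `z₀` uses the edge `p — z₀`; a prefix then reaches `p`, contradiction
    have hrev' : s(z₀, p) ∈ τ.reverse.edges := by
      rw [Walk.edges_reverse, List.mem_reverse, Sym2.eq_swap]; exact hpzτ
    obtain ⟨hadj, ρ', hdecomp⟩ :=
      exists_cons_of_start_mem_edge hτp.reverse hrev' (Ne.symm hpz)
    have hnodup := hτp.reverse.edges_nodup
    rw [hdecomp, Walk.edges_cons] at hnodup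
    have hnotin : s(z₀, p) ∉ ρ'.edges := (List.nodup_cons.mp hnodup).1
    have hsubρ : ∀ e ∈ ρ'.edges, e ∈ τ.edges := by
      intro e he
      have h2 : e ∈ τ.reverse.edges := by
        rw [hdecomp, Walk.edges_cons]; exact List.mem_cons_of_mem _ he
      rw [Walk.edges_reverse, List.mem_reverse] at h2; exact h2
    have hinG : ∀ e ∈ ρ'.edges, e ∈ (drGraph Θ S).edgeSet := by
      intro e he
      rcases edgeSet_update hother hp' (hτG' e (hsubρ e he)) with h | h
      · exact h
      · exact absurd he (by rw [h, Sym2.eq_swap]; exact hnotin)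
    have hwalk := (ρ'.transfer (drGraph Θ S) hinG).toDeleteEdges (belowEdges Θ A)
      (fun e he => by rw [Walk.edges_transfer] at he; exact hτnb e (hsubρ e he))
    exact hpc (Reachable.symm ⟨hwalk⟩)
  · -- the path to `z₀` lives in `G`
    have hτinG : ∀ e ∈ τ.edges, e ∈ (drGraph Θ S).edgeSet := fun e he =>
      (edgeSet_update hother hp' (hτG' e he)).resolve_right (fun h => hpzτ (h ▸ he))
    obtain ⟨π₀⟩ := (hΘ S).2.preconnected A p
    let π := π₀.bypass
    have hπp : π.IsPath := π₀.bypass_isPath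
    have heA : s(A, c) ∈ π.edges := by
      by_contra hno
      apply hpc
      refine ⟨π.toDeleteEdges (belowEdges Θ A) ?_⟩
      intro e he hbad
      rw [hbA, Set.mem_singleton_iff] at hbad
      exact hno (hbad ▸ he)
    have hotherrev : ∀ L, L ≠ MLLLink.par r₁ r₂ z₀ → S L = S' L :=
      fun L hL => (hother L hL).symm
    by_cases hqπ : s(q, z₀) ∈ π.edges
    · by_cases hz₀A : z₀ = A
      · -- conclusion of the par link is `A` itself: both edges contain `A`
        subst hz₀A
        have hequ := edges_start_unique hπp heA hqπ
          (by rw [Sym2.mem_iff]; exact Or.inl rfl)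
          (by rw [Sym2.mem_iff]; exact Or.inr rfl)
        have hqc : q = c := by
          rcases Sym2.eq_iff.mp hequ with ⟨h1, h2⟩ | ⟨h1, h2⟩
          · exact absurd h2.symm hac
          · exact h2.symm
        have hqmem : q = r₁ ∨ q = r₂ := by
          rcases hq with ⟨-, h1, -⟩ | ⟨-, h1, -⟩
          · exact Or.inl h1
          · exact Or.inr h1
        rcases hqmem with h | h
        · exact (hNP r₁ r₂ hℓ).1 (by rw [← h]; exact hqc)
        · exact (hNP r₁ r₂ hℓ).2 (by rw [← h]; exact hqc)
      · -- prefix of `π` up to `z₀` equals the `τ` path, but contains `s(A,c)`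
        have hz₀supp : z₀ ∈ π.support := Walk.snd_mem_support_of_mem_edges π hqπ
        obtain ⟨hadjAc, π₂, hdec⟩ := exists_cons_of_start_mem_edge hπp heA hac
        have hconsP := (Walk.cons_isPath_iff hadjAc π₂).mp (hdec ▸ hπp)
        have hz₀π₂ : z₀ ∈ π₂.support := by
          have h2 : z₀ ∈ π.support := hz₀supp
          rw [hdec, Walk.support_cons] at h2
          rcases List.mem_cons.mp h2 with h | h
          · exact absurd h hz₀A
          · exact h
        have hprep : (Walk.cons hadjAc (π₂.takeUntil z₀ hz₀π₂)).IsPath := by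
          rw [Walk.cons_isPath_iff]
          exact ⟨hconsP.1.takeUntil _, fun hA => hconsP.2 (Walk.support_takeUntil_subset _ _ hA)⟩
        have hτGp : (τ.transfer (drGraph Θ S) hτinG).IsPath := hτp.transfer _
        have huniq := (hΘ S).1.path_unique
          ⟨Walk.cons hadjAc (π₂.takeUntil z₀ hz₀π₂), hprep⟩
          ⟨τ.transfer (drGraph Θ S) hτinG, hτGp⟩
        have hval : Walk.cons hadjAc (π₂.takeUntil z₀ hz₀π₂)
            = τ.transfer (drGraph Θ S) hτinG := congrArg Subtype.val huniq
        have hmem : s(A, c) ∈ (τ.transfer (drGraph Θ S) hτinG).edges := by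
          rw [← hval, Walk.edges_cons]
          exact List.mem_cons_self
        rw [Walk.edges_transfer] at hmem
        exact hτnb _ hmem (by rw [hbA]; exact Set.mem_singleton _)
    · -- `π` avoids `s(q,z₀)`, so it lives in `G'`; uniqueness of paths in `G'`
      have hπG' : ∀ e ∈ π.edges, e ∈ (drGraph Θ S').edgeSet := by
        intro e he
        rcases edgeSet_update hotherrev hq (π.edges_subset_edgeSet he) with h | h
        · exact h
        · exact absurd (h ▸ he) hqπ
      have hadj' : (drGraph Θ S').Adj z₀ p := (adj_of_link hℓ hp' hpz).symm
      have huniq := (hΘ S').1.path_unique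
        ⟨(τ.concat hadj').bypass, (τ.concat hadj').bypass_isPath⟩
        ⟨π.transfer (drGraph Θ S') hπG', hπp.transfer _⟩
      have hval : (τ.concat hadj').bypass = π.transfer (drGraph Θ S') hπG' :=
        congrArg Subtype.val huniq
      have hmem : s(A, c) ∈ (τ.concat hadj').bypass.edges := by
        rw [hval, Walk.edges_transfer]
        exact heA
      have hmem2 := (τ.concat hadj').edges_bypass_subset hmem
      rw [Walk.edges_concat, List.concat_eq_append] at hmem2
      rcases List.mem_append.mp hmem2 with h | h
      · exact hτnb _ h (by rw [hbA]; exact Set.mem_singleton _)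
      · have h2 : s(A, c) = s(z₀, p) := by simpa using h
        apply hedge
        rw [hbA, Set.mem_singleton_iff, Sym2.eq_swap]
        exact h2.symm

/-- Upward closure of the empire: premises of a link whose conclusion is in
the empire belong to the empire (provided the connecting edge is not the edge
below `A`). -/
lemma upward_closure {Θ : MLLProofStructure V} (hΘ : IsProofNet Θ) {A c : V}
    (hbA : belowEdges Θ A = {s(A, c)}) (hac : A ≠ c)
    (hNP : ∀ x y : V, MLLLink.par x y A ∈ Θ.links → x ≠ c ∧ y ≠ c)
    {ℓ : MLLLink V} (hℓ : ℓ ∈ Θ.links) {z₀ p : V}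
    (hz : z₀ ∈ ℓ.concls) (hp : p ∈ ℓ.prems)
    (hedge : s(p, z₀) ∉ belowEdges Θ A) (hzE : z₀ ∈ empire Θ A) :
    p ∈ empire Θ A := by
  rw [empire, Set.mem_iInter]
  intro S
  by_contra hpc
  have hpc' : ¬ (empGraph Θ S A).Reachable A p := hpc
  have hzS : z₀ ∈ empComp Θ S A := Set.mem_iInter.mp hzE S
  have hpz : p ≠ z₀ := by rintro rfl; exact hpc hzS
  have hnoadj : ∀ L ∈ Θ.links, switchEdge S L p z₀ → False := by
    intro L hL hsw
    exact hpc (empComp_adj hzS (adj_of_link hL hsw hpz).symm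
      (by rwa [Sym2.eq_swap]))
  cases ℓ with
  | idl c₁ c₂ => simp [MLLLink.prems] at hp
  | tensor a b c' =>
      have hzeq : z₀ = c' := by simpa [MLLLink.concls] using hz
      subst hzeq
      rcases (by simpa [MLLLink.prems] using hp : p = a ∨ p = b) with rfl | rfl
      · exact hnoadj _ hℓ (Or.inl ⟨rfl, rfl⟩)
      · exact hnoadj _ hℓ (Or.inr ⟨rfl, rfl⟩)
  | par r₁ r₂ z' =>
      have hzeq : z₀ = z' := by simpa [MLLLink.concls] using hz
      subst hzeq
      rcases (by simpa [MLLLink.prems] using hp : p = r₁ ∨ p = r₂) with rfl | rfl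
      · -- p = r₁
        cases hb : S (MLLLink.par p r₂ z₀) with
        | true => exact hnoadj _ hℓ (Or.inl ⟨hb, rfl, rfl⟩)
        | false =>
            refine upward_core hΘ hbA hac hNP hℓ
              (S' := Function.update S (MLLLink.par p r₂ z₀) true)
              (fun L hL => Function.update_of_ne hL _ _)
              (Or.inr ⟨hb, rfl, rfl⟩)
              (Or.inl ⟨Function.update_self _ _ _, rfl, rfl⟩)
              hedge hzE hpz (Or.inl rfl) hpc'
      · -- p = r₂
        cases hb : S (MLLLink.par r₁ p z₀) with
        | false => exact hnoadj _ hℓ (Or.inr ⟨hb, rfl, rfl⟩)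
        | true =>
            refine upward_core hΘ hbA hac hNP hℓ
              (S' := Function.update S (MLLLink.par r₁ p z₀) false)
              (fun L hL => Function.update_of_ne hL _ _)
              (Or.inl ⟨hb, rfl, rfl⟩)
              (Or.inr ⟨Function.update_self _ _ _, rfl, rfl⟩)
              hedge hzE hpz (Or.inr rfl) hpc'

end EmpAux3

namespace EmpAux4
open SimpleGraph EmpAux EmpAux2 EmpAux3
variable {V : Type} [DecidableEq V]

lemma c_not_mem {Θ : MLLProofStructure V} (hΘ : IsProofNet Θ) {A c : V} {LA : MLLLink V}
    (hLA : LA ∈ Θ.links) (hac : A ≠ c) (hbA : belowEdges Θ A = {s(A, c)})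
    (hAct : ∀ S₀ : MLLLink V → Bool,
      ∃ S, (∀ L, L ≠ LA → S L = S₀ L) ∧ switchEdge S LA A c) :
    c ∉ empire Θ A := by
  obtain ⟨S, -, hsw⟩ := hAct (fun _ => true)
  have hAdj : (drGraph Θ S).Adj A c := adj_of_link hLA hsw hac
  have hbr := (isAcyclic_iff_forall_adj_isBridge.mp (hΘ S).1) hAdj
  have hnr := (isBridge_iff.mp hbr)
  intro hc
  have hr : (empGraph Θ S A).Reachable A c := Set.mem_iInter.mp hc S
  apply hnr
  have hgr : empGraph Θ S A = (drGraph Θ S) \ SimpleGraph.fromEdgeSet {s(A, c)} := by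
    rw [empGraph, hbA]; rfl
  rwa [hgr] at hr

lemma card_contra [Fintype V] {Θ : MLLProofStructure V} (hΘ : IsProofNet Θ)
    {S S₁ : MLLLink V → Bool} (hmono : drGraph Θ S ≤ drGraph Θ S₁)
    {u w : V} (hAdj : (drGraph Θ S₁).Adj u w) (hnot : ¬ (drGraph Θ S).Adj u w) : False := by
  classical
  have h1 := SimpleGraph.IsTree.card_edgeFinset ⟨(hΘ S).2, (hΘ S).1⟩
  have h2 := SimpleGraph.IsTree.card_edgeFinset ⟨(hΘ S₁).2, (hΘ S₁).1⟩
  have hsub : (drGraph Θ S).edgeFinset ⊆ (drGraph Θ S₁).edgeFinset :=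
    SimpleGraph.edgeFinset_mono hmono
  have hss : (drGraph Θ S).edgeFinset ⊂ (drGraph Θ S₁).edgeFinset := by
    refine ⟨hsub, fun hsup => hnot ?_⟩
    have : s(u, w) ∈ (drGraph Θ S).edgeFinset :=
      hsup (by rw [SimpleGraph.mem_edgeFinset]; exact hAdj)
    rw [SimpleGraph.mem_edgeFinset] at this
    exact this
  have := Finset.card_lt_card hss
  omega

lemma no_other_provider {Θ : MLLProofStructure V} {S : MLLLink V → Bool} {A c : V}
    {LA : MLLLink V} (hLA : LA ∈ Θ.links) (hAp : A ∈ LA.prems) (hconcls : LA.concls = [c])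
    {x y u : V} (hℓ' : MLLLink.par x y A ∈ Θ.links)
    (hsel : ¬ switchEdge S (MLLLink.par x y A) u A)
    (huc : u ≠ c) (huA : u ≠ A) : ¬ (drGraph Θ S).Adj u A := by
  intro hAdj
  obtain ⟨L, hL, hc⟩ := adj_cases hAdj
  have hAconcl : A ∈ (MLLLink.par x y A).concls := by simp [MLLLink.concls]
  rcases hc with ⟨c₁, c₂, rfl, he⟩ | ⟨a, b, cc, rfl, he⟩ | ⟨a, b, cc, rfl, he⟩
  · -- axiom provider: its conclusions are u and A, so it concludes A: must be ℓ', absurd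
    have : A ∈ (MLLLink.idl c₁ c₂).concls := by
      rcases Sym2.eq_iff.mp he with ⟨h1, h2⟩ | ⟨h1, h2⟩ <;>
        simp [MLLLink.concls, ← h1, ← h2]
    exact absurd (Θ.concl_unique A _ hL _ hℓ' this hAconcl) (by simp)
  · -- tensor provider
    rcases he with he | he
    all_goals {
      rcases Sym2.eq_iff.mp he with ⟨h1, h2⟩ | ⟨h1, h2⟩
      · -- cc = A : conclusion is A, so the link is ℓ', absurd
        have : A ∈ (MLLLink.tensor a b cc).concls := by simp [MLLLink.concls, ← h2]
        exact absurd (Θ.concl_unique A _ hL _ hℓ' this hAconcl) (by simp)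
      · -- cc = u, premise A: the link is LA, so u = c, absurd
        have hAprem : A ∈ (MLLLink.tensor a b cc).prems := by
          simp [MLLLink.prems]
          first
            | exact Or.inl h2
            | exact Or.inr h2
            | exact Or.inl h2.symm
            | exact Or.inr h2.symm
        have hLLA := Θ.prem_unique A _ hL _ hLA hAprem hAp
        have : u ∈ LA.concls := by
          rw [← hLLA]
          simp [MLLLink.concls, ← h1]
        rw [hconcls] at this
        exact huc (by simpa using this)
    }
  · -- par provider
    rcases he with ⟨hb, he⟩ | ⟨hb, he⟩
    all_goals {
      rcases Sym2.eq_iff.mp he with ⟨h1, h2⟩ | ⟨h1, h2⟩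
      · -- cc = A: the link is ℓ'
        have : A ∈ (MLLLink.par a b cc).concls := by simp [MLLLink.concls, ← h2]
        have hLeq := Θ.concl_unique A _ hL _ hℓ' this hAconcl
        apply hsel
        rw [← hLeq]
        first
          | exact Or.inl ⟨hb, h1, h2⟩
          | exact Or.inr ⟨hb, h1, h2⟩
      · -- cc = u, premise A: the link is LA
        have hAprem : A ∈ (MLLLink.par a b cc).prems := by
          simp [MLLLink.prems]
          first
            | exact Or.inl h2
            | exact Or.inr h2
            | exact Or.inl h2.symm
            | exact Or.inr h2.symm
        have hLLA := Θ.prem_unique A _ hL _ hLA hAprem hAp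
        have : u ∈ LA.concls := by
          rw [← hLLA]
          simp [MLLLink.concls, ← h1]
        rw [hconcls] at this
        exact huc (by simpa using this)
    }

end EmpAux4

namespace EmpAux5
open SimpleGraph EmpAux EmpAux2 EmpAux3 EmpAux4
variable {V : Type} [DecidableEq V]

lemma no_par_above [Fintype V] {Θ : MLLProofStructure V} (hΘ : IsProofNet Θ)
    {A c : V} {LA : MLLLink V} (hLA : LA ∈ Θ.links)
    (hAp : A ∈ LA.prems) (hconcls : LA.concls = [c]) (hac : A ≠ c)
    (hAct : ∀ S₀ : MLLLink V → Bool,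
      ∃ S, (∀ L, L ≠ LA → S L = S₀ L) ∧ switchEdge S LA A c) :
    ∀ x y : V, MLLLink.par x y A ∈ Θ.links → x ≠ c ∧ y ≠ c := by
  intro x y hℓ'
  have hne' : MLLLink.par x y A ≠ LA := by
    intro h
    have h2 : A ∈ LA.concls := by rw [← h]; simp [MLLLink.concls]
    rw [hconcls] at h2
    exact hac (by simpa using h2)
  obtain ⟨hxy, hxA, hyA⟩ := nodup_par hℓ'
  constructor
  · rintro rfl
    obtain ⟨S, hSoth, hswLA⟩ := hAct (fun L => decide (L = MLLLink.par x y A))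
    have hSl : S (MLLLink.par x y A) = true := by rw [hSoth _ hne']; simp
    have hS₁l : Function.update S (MLLLink.par x y A) false (MLLLink.par x y A) = false :=
      Function.update_self _ _ _
    have hS₁oth : ∀ L, L ≠ MLLLink.par x y A →
        Function.update S (MLLLink.par x y A) false L = S L :=
      fun L hL => Function.update_of_ne hL _ _
    have hLAne : LA ≠ MLLLink.par x y A := fun h => hne' h.symm
    have hswLA₁ : switchEdge (Function.update S (MLLLink.par x y A) false) LA A x :=
      (switchEdge_congr (hS₁oth LA hLAne)).mpr hswLA
    have hmono : drGraph Θ S ≤ drGraph Θ (Function.update S (MLLLink.par x y A) false) := by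
      intro v w hAdj
      rcases edge_update (S := Function.update S (MLLLink.par x y A) false) (S' := S)
          (fun L hL => (hS₁oth L hL).symm) (Or.inl ⟨hSl, rfl, rfl⟩) hAdj with h | h
      · exact h
      · exact adj_of_link' hLA hswLA₁ hAdj.ne (by rw [h, Sym2.eq_swap])
    have hAdjyA : (drGraph Θ (Function.update S (MLLLink.par x y A) false)).Adj y A :=
      adj_of_link hℓ' (Or.inr ⟨hS₁l, rfl, rfl⟩) hyA
    have hnot : ¬ (drGraph Θ S).Adj y A := by
      refine no_other_provider hLA hAp hconcls hℓ' ?_ (Ne.symm hxy) hyA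
      rintro (⟨-, h1, -⟩ | ⟨hb, -, -⟩)
      · exact hxy h1.symm
      · rw [hSl] at hb; exact absurd hb (by simp)
    exact card_contra hΘ hmono hAdjyA hnot
  · rintro rfl
    obtain ⟨S, hSoth, hswLA⟩ := hAct (fun L => !(decide (L = MLLLink.par x y A)))
    have hSl : S (MLLLink.par x y A) = false := by rw [hSoth _ hne']; simp
    have hS₁l : Function.update S (MLLLink.par x y A) true (MLLLink.par x y A) = true :=
      Function.update_self _ _ _
    have hS₁oth : ∀ L, L ≠ MLLLink.par x y A →
        Function.update S (MLLLink.par x y A) true L = S L :=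
      fun L hL => Function.update_of_ne hL _ _
    have hLAne : LA ≠ MLLLink.par x y A := fun h => hne' h.symm
    have hswLA₁ : switchEdge (Function.update S (MLLLink.par x y A) true) LA A y :=
      (switchEdge_congr (hS₁oth LA hLAne)).mpr hswLA
    have hmono : drGraph Θ S ≤ drGraph Θ (Function.update S (MLLLink.par x y A) true) := by
      intro v w hAdj
      rcases edge_update (S := Function.update S (MLLLink.par x y A) true) (S' := S)
          (fun L hL => (hS₁oth L hL).symm) (Or.inr ⟨hSl, rfl, rfl⟩) hAdj with h | h
      · exact h
      · exact adj_of_link' hLA hswLA₁ hAdj.ne (by rw [h, Sym2.eq_swap])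
    have hAdjxA : (drGraph Θ (Function.update S (MLLLink.par x y A) true)).Adj x A :=
      adj_of_link hℓ' (Or.inl ⟨hS₁l, rfl, rfl⟩) hxA
    have hnot : ¬ (drGraph Θ S).Adj x A := by
      refine no_other_provider hLA hAp hconcls hℓ' ?_ hxy hxA
      rintro (⟨hb, -, -⟩ | ⟨-, h1, -⟩)
      · rw [hSl] at hb; exact absurd hb (by simp)
      · exact hxy h1
    exact card_contra hΘ hmono hAdjxA hnot

end EmpAux5

namespace EmpAux6
open SimpleGraph EmpAux EmpAux2 EmpAux3 EmpAux4 EmpAux5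
variable {V : Type} [DecidableEq V]

/-- The subgraph of the DR-graph induced on the empire of `A`. -/
def intGraph (Θ : MLLProofStructure V) (S : MLLLink V → Bool) (A : V) : SimpleGraph V where
  Adj v w := (drGraph Θ S).Adj v w ∧ v ∈ empire Θ A ∧ w ∈ empire Θ A
  symm := ⟨fun v w ⟨h, h1, h2⟩ => ⟨h.symm, h2, h1⟩⟩
  loopless := ⟨fun v h => (drGraph Θ S).irrefl h.1⟩

open scoped Classical in
/-- A principal switching for `A`. -/
noncomputable def principalS (Θ : MLLProofStructure V) (A : V) : MLLLink V → Bool :=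
  fun L => match L with
  | MLLLink.par r₁ r₂ z₀ =>
      if ((r₁ ∈ empire Θ A ↔ z₀ ∈ empire Θ A) ∨ s(r₁, z₀) ∈ belowEdges Θ A) then true
      else false
  | _ => true

/-- The property of selections required of a principal switching. -/
def SelGood (Θ : MLLProofStructure V) (A : V) (S : MLLLink V → Bool) : Prop :=
  ∀ {r₁ r₂ z₀ : V}, MLLLink.par r₁ r₂ z₀ ∈ Θ.links →
    ∀ {x w : V}, switchEdge S (MLLLink.par r₁ r₂ z₀) x w →
      ((x ∈ empire Θ A ↔ w ∈ empire Θ A) ∨ s(x, w) ∈ belowEdges Θ A)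

lemma principal_spec {Θ : MLLProofStructure V} (hΘ : IsProofNet Θ) {A c : V}
    (hbA : belowEdges Θ A = {s(A, c)}) (hac : A ≠ c)
    (hNP : ∀ x y : V, MLLLink.par x y A ∈ Θ.links → x ≠ c ∧ y ≠ c) :
    SelGood Θ A (principalS Θ A) := by
  classical
  intro r₁ r₂ z₀ hℓ x w hsw
  rcases hsw with ⟨hb, h1, h2⟩ | ⟨hb, h1, h2⟩ <;> rw [h1, h2]
  · by_cases hcond : ((r₁ ∈ empire Θ A ↔ z₀ ∈ empire Θ A) ∨ s(r₁, z₀) ∈ belowEdges Θ A)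
    · exact hcond
    · exfalso
      have : principalS Θ A (MLLLink.par r₁ r₂ z₀) = false := by
        simp only [principalS]
        rw [if_neg hcond]
      rw [this] at hb
      exact absurd hb (by simp)
  · have hcond : ¬((r₁ ∈ empire Θ A ↔ z₀ ∈ empire Θ A) ∨ s(r₁, z₀) ∈ belowEdges Θ A) := by
      intro hcond
      have : principalS Θ A (MLLLink.par r₁ r₂ z₀) = true := by
        simp only [principalS]
        rw [if_pos hcond]
      rw [this] at hb
      exact absurd hb (by simp)
    push_neg at hcond
    obtain ⟨hc1, hc2⟩ := hcond
    by_cases he2 : s(r₂, z₀) ∈ belowEdges Θ A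
    · exact Or.inr he2
    by_cases hzE : z₀ ∈ empire Θ A
    · left
      have hr₂ : r₂ ∈ empire Θ A :=
        upward_closure hΘ hbA hac hNP hℓ (by simp [MLLLink.concls])
          (by simp [MLLLink.prems]) he2 hzE
      exact ⟨fun _ => hzE, fun _ => hr₂⟩
    · left
      have hr₁E : r₁ ∈ empire Θ A := by
        rcases hc1 with ⟨h, -⟩ | ⟨-, hz⟩
        · exact h
        · exact absurd hz hzE
      constructor
      · intro hr₂E
        exfalso
        apply hzE
        rw [empire, Set.mem_iInter]
        intro S
        cases hbS : S (MLLLink.par r₁ r₂ z₀) with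
        | true =>
            exact empComp_adj (Set.mem_iInter.mp hr₁E S)
              (adj_of_link hℓ (Or.inl ⟨hbS, rfl, rfl⟩) (nodup_par hℓ).2.1) hc2
        | false =>
            exact empComp_adj (Set.mem_iInter.mp hr₂E S)
              (adj_of_link hℓ (Or.inr ⟨hbS, rfl, rfl⟩) (nodup_par hℓ).2.2) he2
      · intro h; exact absurd h hzE

lemma step_E {Θ : MLLProofStructure V} {A : V} {S : MLLLink V → Bool}
    (hprop : SelGood Θ A S)
    {v w : V} (hAdj : (drGraph Θ S).Adj v w) (hbw : s(v, w) ∉ belowEdges Θ A)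
    (hv : v ∈ empire Θ A) : w ∈ empire Θ A := by
  obtain ⟨L, hL, hc⟩ := adj_cases hAdj
  rcases hc with ⟨c₁, c₂, rfl, he⟩ | ⟨a, b, cc, rfl, he⟩ | ⟨a, b, cc, rfl, he⟩
  · rw [empire, Set.mem_iInter]; intro S''
    refine empComp_adj (Set.mem_iInter.mp hv S'') ?_ hbw
    exact adj_of_link' hL (show switchEdge S'' _ c₁ c₂ from ⟨rfl, rfl⟩) hAdj.ne he
  · rw [empire, Set.mem_iInter]; intro S''
    refine empComp_adj (Set.mem_iInter.mp hv S'') ?_ hbw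
    rcases he with he | he
    · exact adj_of_link' hL (Or.inl ⟨rfl, rfl⟩) hAdj.ne he
    · exact adj_of_link' hL (Or.inr ⟨rfl, rfl⟩) hAdj.ne he
  · rcases he with ⟨hb, he⟩ | ⟨hb, he⟩
    · rcases hprop hL (Or.inl ⟨hb, rfl, rfl⟩ : switchEdge S (MLLLink.par a b cc) a cc) with hiff | hbad
      · rcases Sym2.eq_iff.mp he with ⟨h1, h2⟩ | ⟨h1, h2⟩
        · rw [h2]; exact hiff.mp (h1 ▸ hv)
        · rw [h2]; exact hiff.mpr (h1 ▸ hv)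
      · exact absurd (by rw [he]; exact hbad) hbw
    · rcases hprop hL (Or.inr ⟨hb, rfl, rfl⟩ : switchEdge S (MLLLink.par a b cc) b cc) with hiff | hbad
      · rcases Sym2.eq_iff.mp he with ⟨h1, h2⟩ | ⟨h1, h2⟩
        · rw [h2]; exact hiff.mp (h1 ▸ hv)
        · rw [h2]; exact hiff.mpr (h1 ▸ hv)
      · exact absurd (by rw [he]; exact hbad) hbw

lemma conn_of_walk {Θ : MLLProofStructure V} {A : V} {S : MLLLink V → Bool}
    (hprop : SelGood Θ A S) :
    ∀ {u x : V} (_ : (empGraph Θ S A).Walk u x), u ∈ empire Θ A →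
      (intGraph Θ S A).Reachable u x ∧ x ∈ empire Θ A := by
  intro u x w
  induction w with
  | nil => exact fun hu => ⟨Reachable.refl _, hu⟩
  | @cons u m x hadj w' ih =>
      intro hu
      have hadj' := SimpleGraph.deleteEdges_adj.mp hadj
      have hm : m ∈ empire Θ A := step_E hprop hadj'.1 hadj'.2 hu
      obtain ⟨hr, hx⟩ := ih hm
      have hstep : (intGraph Θ S A).Adj u m := ⟨hadj'.1, hu, hm⟩
      exact ⟨hstep.reachable.trans hr, hx⟩

/-- At a good switching, the empire is internally connected to `A`. -/
lemma conn_good {Θ : MLLProofStructure V} {A : V} {S : MLLLink V → Bool}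
    (hprop : SelGood Θ A S) (hAE : A ∈ empire Θ A) :
    ∀ x ∈ empire Θ A, (intGraph Θ S A).Reachable A x := by
  intro x hx
  obtain ⟨w⟩ := Set.mem_iInter.mp hx S
  exact (conn_of_walk hprop w hAE).1

end EmpAux6

namespace EmpAux7
open SimpleGraph EmpAux EmpAux2 EmpAux3 EmpAux4 EmpAux5 EmpAux6
variable {V : Type} [DecidableEq V]

lemma conn_flip_core {Θ : MLLProofStructure V} (hΘ : IsProofNet Θ) {A c : V}
    (hbA : belowEdges Θ A = {s(A, c)}) (hac : A ≠ c) (hcE : c ∉ empire Θ A)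
    (hNP : ∀ x y : V, MLLLink.par x y A ∈ Θ.links → x ≠ c ∧ y ≠ c)
    {r₁ r₂ z₀ : V} (hℓ : MLLLink.par r₁ r₂ z₀ ∈ Θ.links)
    {p q : V} {S S' : MLLLink V → Bool}
    (hother : ∀ L, L ≠ MLLLink.par r₁ r₂ z₀ → S' L = S L)
    (hswS : switchEdge S (MLLLink.par r₁ r₂ z₀) p z₀)
    (hswS' : switchEdge S' (MLLLink.par r₁ r₂ z₀) q z₀)
    (hpz : p ≠ z₀) (hqz : q ≠ z₀)
    (hconn : ∀ x ∈ empire Θ A, (intGraph Θ S A).Reachable A x) :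
    ∀ x ∈ empire Θ A, (intGraph Θ S' A).Reachable A x := by
  have hotherrev : ∀ L, L ≠ MLLLink.par r₁ r₂ z₀ → S L = S' L :=
    fun L hL => (hother L hL).symm
  by_cases hzE : z₀ ∈ empire Θ A
  · -- the link lies inside the empire
    have hprem : ∀ u : V, u = r₁ ∨ u = r₂ → u ∈ empire Θ A := by
      intro u hu
      have hnb : s(u, z₀) ∉ belowEdges Θ A := by
        intro hbad
        rw [hbA, Set.mem_singleton_iff] at hbad
        rcases Sym2.eq_iff.mp hbad with ⟨h1, h2⟩ | ⟨h1, h2⟩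
        · exact hcE (h2 ▸ hzE)
        · rw [h2] at hℓ
          rcases hu with h | h
          · exact (hNP r₁ r₂ hℓ).1 (by rw [← h]; exact h1)
          · exact (hNP r₁ r₂ hℓ).2 (by rw [← h]; exact h1)
      refine upward_closure hΘ hbA hac hNP hℓ (by simp [MLLLink.concls]) ?_ hnb hzE
      rcases hu with h | h <;> rw [h] <;> simp [MLLLink.prems]
    have hpmem : p = r₁ ∨ p = r₂ := by
      rcases hswS with ⟨-, h1, -⟩ | ⟨-, h1, -⟩
      · exact Or.inl h1
      · exact Or.inr h1
    have hqmem : q = r₁ ∨ q = r₂ := by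
      rcases hswS' with ⟨-, h1, -⟩ | ⟨-, h1, -⟩
      · exact Or.inl h1
      · exact Or.inr h1
    have hpE : p ∈ empire Θ A := hprem p hpmem
    have hqE : q ∈ empire Θ A := hprem q hqmem
    by_cases hpz' : s(p, z₀) ∈ (drGraph Θ S').edgeSet
    · intro x hx
      refine reach_subst ?_ (hconn x hx)
      rintro u v ⟨hAdj, huE, hvE⟩
      rcases edge_update (S := S') (S' := S) hotherrev hswS hAdj with h | h
      · exact Adj.reachable ⟨h, huE, hvE⟩
      · exact Adj.reachable
          ⟨(SimpleGraph.mem_edgeSet _).mp (by rw [h]; exact hpz'), huE, hvE⟩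
    · -- the edge `p—z₀` disappears when flipping; reroute through `q`
      have hAdjS : (drGraph Θ S).Adj p z₀ := adj_of_link hℓ hswS hpz
      have hbridge : ¬((drGraph Θ S).deleteEdges {s(p, z₀)}).Reachable p z₀ :=
        (isBridge_iff.mp ((isAcyclic_iff_forall_adj_isBridge.mp (hΘ S).1) hAdjS))
      obtain ⟨wpz⟩ := (hΘ S').2.preconnected p z₀
      have hHq : ((drGraph Θ S).deleteEdges {s(p, z₀)}).Reachable p q := by
        have hro := reach_or (H := (drGraph Θ S).deleteEdges {s(p, z₀)})
          (a := q) (b := z₀)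
          (fun u v hAdj' => by
            rcases edge_update (S := S) (S' := S') hother hswS' hAdj' with h | h
            · refine Or.inl (SimpleGraph.deleteEdges_adj.mpr ⟨h, ?_⟩)
              intro hbad
              rw [Set.mem_singleton_iff] at hbad
              apply hpz'
              rw [← hbad]
              exact (SimpleGraph.mem_edgeSet _).mpr hAdj'
            · exact Or.inr h) wpz
        rcases hro with h | h | h
        · exact absurd h hbridge
        · exact h
        · exact absurd h hbridge
      have hintpq : (intGraph Θ S A).Reachable q p :=
        (hconn q hqE).symm.trans (hconn p hpE)
      obtain ⟨wqp⟩ := hintpq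
      have h2 := reach_or (H := (intGraph Θ S A).deleteEdges {s(p, z₀)})
        (a := p) (b := z₀)
        (fun u v hAdj' => by
          by_cases hcase : s(u, v) = s(p, z₀)
          · exact Or.inr hcase
          · exact Or.inl (SimpleGraph.deleteEdges_adj.mpr
              ⟨hAdj', by simpa using hcase⟩)) wqp
      have hqp1 : ((intGraph Θ S A).deleteEdges {s(p, z₀)}).Reachable q p := by
        rcases h2 with h | h | h
        · exact h
        · exact h
        · exfalso
          have hqz₀ : ((drGraph Θ S).deleteEdges {s(p, z₀)}).Reachable q z₀ := by
            refine reach_subst ?_ h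
            intro u v hAdj'
            have h3 := SimpleGraph.deleteEdges_adj.mp hAdj'
            exact Adj.reachable (SimpleGraph.deleteEdges_adj.mpr ⟨h3.1.1, h3.2⟩)
          exact hbridge (hHq.trans hqz₀)
      have hqp2 : (intGraph Θ S' A).Reachable q p := by
        refine reach_subst ?_ hqp1
        intro u v hAdj'
        have h3 := SimpleGraph.deleteEdges_adj.mp hAdj'
        obtain ⟨⟨hAdjG, huE, hvE⟩, hne⟩ := h3
        rcases edge_update (S := S') (S' := S) hotherrev hswS hAdjG with h | h
        · exact Adj.reachable ⟨h, huE, hvE⟩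
        · exact absurd h (by simpa using hne)
      have hAdjqz' : (intGraph Θ S' A).Adj q z₀ :=
        ⟨adj_of_link hℓ hswS' hqz, hqE, hzE⟩
      have hdetour : (intGraph Θ S' A).Reachable p z₀ :=
        hqp2.symm.trans hAdjqz'.reachable
      intro x hx
      refine reach_subst ?_ (hconn x hx)
      rintro u v ⟨hAdj, huE, hvE⟩
      rcases edge_update (S := S') (S' := S) hotherrev hswS hAdj with h | h
      · exact Adj.reachable ⟨h, huE, hvE⟩
      · rcases Sym2.eq_iff.mp h with ⟨rfl, rfl⟩ | ⟨rfl, rfl⟩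
        · first
            | exact hdetour
            | exact hdetour.symm
        · first
            | exact hdetour
            | exact hdetour.symm
  · -- the conclusion of the link is outside the empire: internal edges unaffected
    intro x hx
    refine reach_subst ?_ (hconn x hx)
    rintro u v ⟨hAdj, huE, hvE⟩
    rcases edge_update (S := S') (S' := S) hotherrev hswS hAdj with h | h
    · exact Adj.reachable ⟨h, huE, hvE⟩
    · exfalso
      rcases Sym2.eq_iff.mp h with ⟨h1, h2⟩ | ⟨h1, h2⟩
      · exact hzE (h2 ▸ hvE)
      · exact hzE (h1 ▸ huE)

lemma conn_flip {Θ : MLLProofStructure V} (hΘ : IsProofNet Θ) {A c : V}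
    (hbA : belowEdges Θ A = {s(A, c)}) (hac : A ≠ c) (hcE : c ∉ empire Θ A)
    (hNP : ∀ x y : V, MLLLink.par x y A ∈ Θ.links → x ≠ c ∧ y ≠ c)
    {r₁ r₂ z₀ : V} (hℓ : MLLLink.par r₁ r₂ z₀ ∈ Θ.links)
    {S S' : MLLLink V → Bool}
    (hother : ∀ L, L ≠ MLLLink.par r₁ r₂ z₀ → S' L = S L)
    (hconn : ∀ x ∈ empire Θ A, (intGraph Θ S A).Reachable A x) :
    ∀ x ∈ empire Θ A, (intGraph Θ S' A).Reachable A x := by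
  obtain ⟨h12, h13, h23⟩ := nodup_par hℓ
  cases hbS : S (MLLLink.par r₁ r₂ z₀) <;> cases hbS' : S' (MLLLink.par r₁ r₂ z₀)
  · exact conn_flip_core hΘ hbA hac hcE hNP hℓ hother
      (Or.inr ⟨hbS, rfl, rfl⟩) (Or.inr ⟨hbS', rfl, rfl⟩) h23 h23 hconn
  · exact conn_flip_core hΘ hbA hac hcE hNP hℓ hother
      (Or.inr ⟨hbS, rfl, rfl⟩) (Or.inl ⟨hbS', rfl, rfl⟩) h23 h13 hconn
  · exact conn_flip_core hΘ hbA hac hcE hNP hℓ hother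
      (Or.inl ⟨hbS, rfl, rfl⟩) (Or.inr ⟨hbS', rfl, rfl⟩) h13 h23 hconn
  · exact conn_flip_core hΘ hbA hac hcE hNP hℓ hother
      (Or.inl ⟨hbS, rfl, rfl⟩) (Or.inl ⟨hbS', rfl, rfl⟩) h13 h13 hconn

end EmpAux7

namespace EmpAux8
open SimpleGraph EmpAux EmpAux2 EmpAux3 EmpAux4 EmpAux5 EmpAux6 EmpAux7
variable {V : Type} [DecidableEq V]

lemma drGraph_congr {Θ : MLLProofStructure V} {S S' : MLLLink V → Bool}
    (h : ∀ L ∈ Θ.links, L.isPar = true → S L = S' L) : drGraph Θ S = drGraph Θ S' := by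
  have hsw : ∀ L ∈ Θ.links, ∀ v w, switchEdge S L v w ↔ switchEdge S' L v w := by
    intro L hL v w
    cases hLp : L.isPar
    · cases L with
      | idl c₁ c₂ => exact Iff.rfl
      | tensor a b c => exact Iff.rfl
      | par a b c => simp [MLLLink.isPar] at hLp
    · exact switchEdge_congr (h L hL hLp)
  have hrel : ∀ v w, drRel Θ S v w ↔ drRel Θ S' v w := by
    intro v w
    constructor
    · rintro ⟨L, hL, hs⟩; exact ⟨L, hL, (hsw L hL v w).mp hs⟩
    · rintro ⟨L, hL, hs⟩; exact ⟨L, hL, (hsw L hL v w).mpr hs⟩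
  ext v w
  rw [drGraph_adj, drGraph_adj, hrel v w, hrel w v]

lemma conn_all {Θ : MLLProofStructure V} (hΘ : IsProofNet Θ) {A c : V}
    (hbA : belowEdges Θ A = {s(A, c)}) (hac : A ≠ c) (hcE : c ∉ empire Θ A)
    (hNP : ∀ x y : V, MLLLink.par x y A ∈ Θ.links → x ≠ c ∧ y ≠ c) :
    ∀ (S : MLLLink V → Bool), ∀ x ∈ empire Θ A, (intGraph Θ S A).Reachable A x := by
  classical
  have hAE : A ∈ empire Θ A := Set.mem_iInter.mpr fun S => Reachable.refl A
  have hbase := conn_good (principal_spec hΘ hbA hac hNP) hAE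
  suffices H : ∀ (n : ℕ) (S : MLLLink V → Bool),
      (Θ.links.filter fun L => L.isPar = true ∧ S L ≠ principalS Θ A L).card = n →
      ∀ x ∈ empire Θ A, (intGraph Θ S A).Reachable A x by
    intro S
    exact H _ S rfl
  intro n
  induction n with
  | zero =>
      intro S hcard x hx
      have hgr : drGraph Θ S = drGraph Θ (principalS Θ A) := by
        apply drGraph_congr
        intro L hL hp
        by_contra hne
        have hmem : L ∈ Θ.links.filter
            (fun L => L.isPar = true ∧ S L ≠ principalS Θ A L) :=
          Finset.mem_filter.mpr ⟨hL, hp, hne⟩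
        rw [Finset.card_eq_zero] at hcard
        rw [hcard] at hmem
        exact absurd hmem (Finset.notMem_empty _)
      refine reach_subst ?_ (hbase x hx)
      rintro u v ⟨hAdj, huE, hvE⟩
      exact Adj.reachable ⟨by rw [hgr]; exact hAdj, huE, hvE⟩
  | succ n ih =>
      intro S hcard
      have hpos : 0 < (Θ.links.filter
          fun L => L.isPar = true ∧ S L ≠ principalS Θ A L).card := by omega
      obtain ⟨L, hLmem⟩ := Finset.card_pos.mp hpos
      obtain ⟨hLl, hLpar, hLne⟩ := Finset.mem_filter.mp hLmem
      cases L with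
      | idl c₁ c₂ => simp [MLLLink.isPar] at hLpar
      | tensor a b cc => simp [MLLLink.isPar] at hLpar
      | par r₁ r₂ z₀ =>
          have hcard' : (Θ.links.filter fun L => L.isPar = true ∧
              Function.update S (MLLLink.par r₁ r₂ z₀)
                (principalS Θ A (MLLLink.par r₁ r₂ z₀)) L ≠ principalS Θ A L).card = n := by
            have hset : (Θ.links.filter fun L => L.isPar = true ∧
                Function.update S (MLLLink.par r₁ r₂ z₀)
                  (principalS Θ A (MLLLink.par r₁ r₂ z₀)) L ≠ principalS Θ A L)
                = (Θ.links.filter fun L => L.isPar = true ∧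
                    S L ≠ principalS Θ A L).erase (MLLLink.par r₁ r₂ z₀) := by
              ext L'
              rw [Finset.mem_erase, Finset.mem_filter, Finset.mem_filter]
              constructor
              · rintro ⟨hL', hp', hne'⟩
                by_cases h : L' = MLLLink.par r₁ r₂ z₀
                · exfalso
                  apply hne'
                  rw [h, Function.update_self]
                · exact ⟨h, hL', hp', by rwa [Function.update_of_ne h] at hne'⟩
              · rintro ⟨h, hL', hp', hne'⟩
                exact ⟨hL', hp', by rwa [Function.update_of_ne h]⟩
            rw [hset, Finset.card_erase_of_mem hLmem, hcard]
            simp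
          have hconn' := ih _ hcard'
          intro x hx
          refine conn_flip hΘ hbA hac hcE hNP hLl ?_ hconn' x hx
          intro L hL
          exact (Function.update_of_ne hL _ _).symm

lemma main_aux [Fintype V] {Θ : MLLProofStructure V} (hΘ : IsProofNet Θ) {A B C : V}
    {c : V} {LA : MLLLink V} (hLA : LA ∈ Θ.links) (hAp : A ∈ LA.prems)
    (hconcls : LA.concls = [c]) (hbA : belowEdges Θ A = {s(A, c)}) (hac : A ≠ c)
    (hAct : ∀ S₀ : MLLLink V → Bool,
      ∃ S, (∀ L, L ≠ LA → S L = S₀ L) ∧ switchEdge S LA A c)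
    (hCA : C ∈ empire Θ A) (hCB : C ∈ empire Θ B) (hBE : B ∉ empire Θ A)
    (hA : A ∉ empire Θ B) : False := by
  have hcE := c_not_mem hΘ hLA hac hbA hAct
  have hNP := no_par_above hΘ hLA hAp hconcls hac hAct
  have hconn := conn_all hΘ hbA hac hcE hNP
  have hex : ∃ S₂, A ∉ empComp Θ S₂ B := by
    by_contra hall
    push_neg at hall
    exact hA (Set.mem_iInter.mpr hall)
  obtain ⟨S₂, hS₂⟩ := hex
  apply hS₂
  have hreachAC : (empGraph Θ S₂ B).Reachable A C := by
    refine reach_subst ?_ (hconn S₂ C hCA)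
    rintro u v ⟨hAdj, huE, hvE⟩
    refine Adj.reachable (SimpleGraph.deleteEdges_adj.mpr ⟨hAdj, ?_⟩)
    rintro ⟨L, hL, hBp, cc, hcc, heq⟩
    rcases Sym2.eq_iff.mp heq with ⟨h1, -⟩ | ⟨-, h2⟩
    · exact hBE (h1 ▸ huE)
    · exact hBE (h2 ▸ hvE)
  have hreachBC : (empGraph Θ S₂ B).Reachable B C := Set.mem_iInter.mp hCB S₂
  exact hreachBC.trans hreachAC.symm

theorem empires_disjoint_of_not_mem' (Θ : MLLProofStructure V) (hΘ : IsProofNet Θ)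
    (A B : V) (hB : B ∉ empire Θ A) (hA : A ∉ empire Θ B) :
    empire Θ A ∩ empire Θ B = ∅ := by
  classical
  by_contra hne
  obtain ⟨C, hCA, hCB⟩ := Set.nonempty_iff_ne_empty.mpr hne
  have hfin : Finite V := finiteV Θ
  haveI := hfin
  haveI : Fintype V := Fintype.ofFinite V
  have hLAex : ∃ L ∈ Θ.links, A ∈ L.prems := by
    by_contra hno
    push_neg at hno
    apply hB
    rw [empire, Set.mem_iInter]
    intro S
    have hempty : belowEdges Θ A = ∅ := by
      ext e
      simp only [belowEdges, Set.mem_setOf_eq, Set.mem_empty_iff_false, iff_false]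
      rintro ⟨L, hL, hAp, -⟩
      exact hno L hL hAp
    have hgr : empGraph Θ S A = drGraph Θ S := by
      rw [empGraph, hempty, SimpleGraph.deleteEdges_empty]
    show (empGraph Θ S A).Reachable A B
    rw [hgr]
    exact (hΘ S).2.preconnected A B
  obtain ⟨LA, hLA, hAp⟩ := hLAex
  have hbAgen : ∀ cc : V, LA.concls = [cc] → belowEdges Θ A = {s(A, cc)} := by
    intro cc hconcls
    ext e
    simp only [belowEdges, Set.mem_setOf_eq, Set.mem_singleton_iff]
    constructor
    · rintro ⟨L, hL, hAp', c', hc', rfl⟩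
      have hLeq := Θ.prem_unique A _ hL _ hLA hAp' hAp
      rw [hLeq, hconcls] at hc'
      have hc'' : c' = cc := by simpa using hc'
      rw [hc'']
    · rintro rfl
      exact ⟨LA, hLA, hAp, cc, by rw [hconcls]; simp, rfl⟩
  cases hLAshape : LA with
  | idl a b => rw [hLAshape] at hAp; simp [MLLLink.prems] at hAp
  | tensor a b cc =>
      rw [hLAshape] at hLA hAp
      have hmem : A = a ∨ A = b := by simpa [MLLLink.prems] using hAp
      obtain ⟨hab, hacc, hbcc⟩ := nodup_tensor hLA
      have hac : A ≠ cc := by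
        rcases hmem with h | h
        · rw [h]; exact hacc
        · rw [h]; exact hbcc
      have hconcls : (MLLLink.tensor a b cc).concls = [cc] := rfl
      have hAct : ∀ S₀ : MLLLink V → Bool, ∃ S,
          (∀ L, L ≠ MLLLink.tensor a b cc → S L = S₀ L) ∧
          switchEdge S (MLLLink.tensor a b cc) A cc := by
        intro S₀
        refine ⟨S₀, fun _ _ => rfl, ?_⟩
        rcases hmem with h | h
        · exact Or.inl ⟨h, rfl⟩
        · exact Or.inr ⟨h, rfl⟩
      exact main_aux hΘ hLA hAp hconcls (hbAgen cc (by rw [hLAshape]; rfl)) hac hAct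
        hCA hCB hB hA
  | par a b cc =>
      rw [hLAshape] at hLA hAp
      have hmem : A = a ∨ A = b := by simpa [MLLLink.prems] using hAp
      obtain ⟨hab, hacc, hbcc⟩ := nodup_par hLA
      have hac : A ≠ cc := by
        rcases hmem with h | h
        · rw [h]; exact hacc
        · rw [h]; exact hbcc
      have hconcls : (MLLLink.par a b cc).concls = [cc] := rfl
      have hAct : ∀ S₀ : MLLLink V → Bool, ∃ S,
          (∀ L, L ≠ MLLLink.par a b cc → S L = S₀ L) ∧
          switchEdge S (MLLLink.par a b cc) A cc := by
        intro S₀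
        refine ⟨Function.update S₀ (MLLLink.par a b cc) (decide (A = a)),
          fun L hL => Function.update_of_ne hL _ _, ?_⟩
        rcases hmem with h | h
        · refine Or.inl ⟨?_, h, rfl⟩
          rw [Function.update_self]
          simp [h]
        · refine Or.inr ⟨?_, h, rfl⟩
          rw [Function.update_self]
          simp only [decide_eq_false_iff_not]
          intro h2
          exact hab (h2.symm.trans h)
      exact main_aux hΘ hLA hAp hconcls (hbAgen cc (by rw [hLAshape]; rfl)) hac hAct
        hCA hCB hB hA

end EmpAux8

/-- If `B ∉ e_Θ(A)` and `A ∉ e_Θ(B)` then the two empires are disjoint. -/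
theorem empires_disjoint_of_not_mem (Θ : MLLProofStructure V) (hΘ : IsProofNet Θ)
    (A B : V) (hB : B ∉ empire Θ A) (hA : A ∉ empire Θ B) :
    empire Θ A ∩ empire Θ B = ∅ :=
  EmpAux8.empires_disjoint_of_not_mem' Θ hΘ A B hB hA
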